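/- Let p be a prime, let G be a p-group generated by m ≥ 1 elements, and let M be a module over the group algebra F_p[G] that is generated, as an F_p[G]-module, by d elements. Let N be an F_p[G]-submodule of M such that the quotient M/N is finite with exactly p^ℓ elements. Then N can be generated, as an F_p[G]-module, by at most d + ℓ·(m − 1) elements. -/

import Mathlib

open MonoidAlgebra Submodule

section Aug
variable (p : ℕ) (G : Type*) [Group G]

/-- The augmentation map. -/
noncomputable def augZ : MonoidAlgebra (ZMod p) G →ₐ[ZMod p] ZMod p :=
  MonoidAlgebra.lift (ZMod p) (ZMod p) G 1

lemma augZ_single (γ : G) (c : ZMod p) : augZ p G (MonoidAlgebra.single γ c) = c := by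
  simp [augZ, MonoidAlgebra.lift_single]

lemma augZ_of (γ : G) : augZ p G (MonoidAlgebra.of (ZMod p) G γ) = 1 := by
  rw [MonoidAlgebra.of_apply, augZ_single]

lemma single_sub_algebraMap (γ : G) (c : ZMod p) :
    (MonoidAlgebra.single γ c : MonoidAlgebra (ZMod p) G)
      - algebraMap (ZMod p) (MonoidAlgebra (ZMod p) G) c =
    (MonoidAlgebra.single (1 : G) c : MonoidAlgebra (ZMod p) G) •
      (MonoidAlgebra.of (ZMod p) G γ - 1) := by
  rw [smul_eq_mul, mul_sub, mul_one]
  rw [MonoidAlgebra.of_apply, MonoidAlgebra.single_mul_single, mul_one, one_mul]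
  rfl

lemma augZ_ker_mem (g : Set G) (hgen : Subgroup.closure g = ⊤) (r : MonoidAlgebra (ZMod p) G)
    (hr : augZ p G r = 0) :
    r ∈ Submodule.span (MonoidAlgebra (ZMod p) G)
      ((fun γ => MonoidAlgebra.of (ZMod p) G γ - 1) '' g) := by
  set J : Submodule (MonoidAlgebra (ZMod p) G) (MonoidAlgebra (ZMod p) G) :=
    Submodule.span (MonoidAlgebra (ZMod p) G)
      ((fun γ => MonoidAlgebra.of (ZMod p) G γ - 1) '' g) with hJ
  have h1 : ∀ γ : G, MonoidAlgebra.of (ZMod p) G γ - 1 ∈ J := by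
    intro γ
    have hγ : γ ∈ Subgroup.closure g := hgen ▸ Subgroup.mem_top γ
    induction hγ using Subgroup.closure_induction with
    | mem γ hγ => exact Submodule.subset_span ⟨γ, hγ, rfl⟩
    | one =>
      rw [MonoidAlgebra.of_apply, ← MonoidAlgebra.one_def, sub_self]
      exact J.zero_mem
    | mul γ δ _ _ hγ hδ =>
      have heq : MonoidAlgebra.of (ZMod p) G (γ * δ) - 1 =
          MonoidAlgebra.of (ZMod p) G γ • (MonoidAlgebra.of (ZMod p) G δ - 1) +
          (MonoidAlgebra.of (ZMod p) G γ - 1) := by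
        rw [map_mul, smul_eq_mul, mul_sub, mul_one]
        abel
      rw [heq]
      exact J.add_mem (J.smul_mem _ hδ) hγ
    | inv γ _ hγ =>
      have heq : MonoidAlgebra.of (ZMod p) G γ⁻¹ - 1 =
          -(MonoidAlgebra.of (ZMod p) G γ⁻¹ • (MonoidAlgebra.of (ZMod p) G γ - 1)) := by
        rw [smul_eq_mul, mul_sub, mul_one, ← map_mul, inv_mul_cancel, map_one]
        abel
      rw [heq]
      exact J.neg_mem (J.smul_mem _ hγ)
  have h2 : ∀ s : MonoidAlgebra (ZMod p) G,
      s - algebraMap (ZMod p) (MonoidAlgebra (ZMod p) G) (augZ p G s) ∈ J := by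
    intro s
    induction s using MonoidAlgebra.induction with
    | zero => simp
    | single_add γ c f _ _ hf =>
      have hsing : (MonoidAlgebra.single γ c : MonoidAlgebra (ZMod p) G)
          - algebraMap (ZMod p) (MonoidAlgebra (ZMod p) G) c ∈ J :=
        (single_sub_algebraMap p G γ c) ▸ J.smul_mem _ (h1 γ)
      have := J.add_mem hsing hf
      convert this using 1
      rw [map_add, augZ_single, map_add, sub_add_sub_comm]
  have h3 := h2 r
  rwa [hr, map_zero, sub_zero] at h3

end Aug

section Phi
variable {p : ℕ} [NeZero p] {G : Type*} [Group G]
variable {M : Type*} [AddCommGroup M] [Module (MonoidAlgebra (ZMod p) G) M]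

lemma phi_smul_single (φ : M →+ ZMod p)
    (hinv : ∀ (γ : G) (x : M), φ (MonoidAlgebra.of (ZMod p) G γ • x) = φ x)
    (γ : G) (c : ZMod p) (x : M) :
    φ ((MonoidAlgebra.single γ c : MonoidAlgebra (ZMod p) G) • x)
      = augZ p G (MonoidAlgebra.single γ c) * φ x := by
  obtain ⟨n, rfl⟩ := ZMod.natCast_zmod_surjective c
  have h1 : (MonoidAlgebra.single γ ((n : ZMod p)) : MonoidAlgebra (ZMod p) G) =
      (n : MonoidAlgebra (ZMod p) G) * MonoidAlgebra.of (ZMod p) G γ := by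
    rw [← map_natCast (algebraMap (ZMod p) (MonoidAlgebra (ZMod p) G)) n,
      ← MonoidAlgebra.single_eq_algebraMap_mul_of]
  rw [h1, mul_smul, Nat.cast_smul_eq_nsmul, map_nsmul, hinv, map_mul, map_natCast, augZ_of,
    mul_one, nsmul_eq_mul]

lemma phi_smul (φ : M →+ ZMod p)
    (hinv : ∀ (γ : G) (x : M), φ (MonoidAlgebra.of (ZMod p) G γ • x) = φ x)
    (r : MonoidAlgebra (ZMod p) G) (x : M) :
    φ (r • x) = augZ p G r * φ x := by
  induction r using MonoidAlgebra.induction with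
  | zero =>
    rw [zero_smul, map_zero, map_zero, zero_mul]
  | single_add γ c f _ _ hf =>
    rw [add_smul, map_add, map_add, add_mul, hf]
    congr 1
    exact phi_smul_single φ hinv γ c x

/-- The kernel of an invariant functional, as a submodule. -/
def kerSub (φ : M →+ ZMod p)
    (hinv : ∀ (γ : G) (x : M), φ (MonoidAlgebra.of (ZMod p) G γ • x) = φ x) :
    Submodule (MonoidAlgebra (ZMod p) G) M where
  carrier := {x | φ x = 0}
  add_mem' ha hb := by simp_all [Set.mem_setOf_eq, map_add]
  zero_mem' := map_zero φ
  smul_mem' r x hx := by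
    simp only [Set.mem_setOf_eq] at hx ⊢
    rw [phi_smul φ hinv, hx, mul_zero]

@[simp] lemma mem_kerSub {φ : M →+ ZMod p} {hinv : ∀ (γ : G) (x : M),
    φ (MonoidAlgebra.of (ZMod p) G γ • x) = φ x} {x : M} :
    x ∈ kerSub φ hinv ↔ φ x = 0 := Iff.rfl

end Phi

section Step
variable {p : ℕ} [Fact p.Prime] {G : Type*} [Group G]
variable {M : Type*} [AddCommGroup M] [Module (MonoidAlgebra (ZMod p) G) M]

lemma step_lemma {m : ℕ} (g : Fin m → G) (hgen : Subgroup.closure (Set.range g) = ⊤)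
    (φ : M →+ ZMod p)
    (hinv : ∀ (γ : G) (x : M), φ (MonoidAlgebra.of (ZMod p) G γ • x) = φ x)
    (S : Finset M) (hSgen : Submodule.span (MonoidAlgebra (ZMod p) G) (S : Set M) = ⊤)
    (x₀ : M) (hx₀S : x₀ ∈ S) (hx₀ : φ x₀ ≠ 0) :
    ∃ T : Finset M, T.card + 1 ≤ S.card + m ∧
      Submodule.span (MonoidAlgebra (ZMod p) G) (T : Set M) = kerSub φ hinv := by
  classical
  set R := MonoidAlgebra (ZMod p) G with hR
  let c : M → ZMod p := fun x => φ x / φ x₀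
  let T₁ : Finset M := (S.erase x₀).image (fun x => x - algebraMap (ZMod p) R (c x) • x₀)
  let T₂ : Finset M := Finset.univ.image (fun j : Fin m => MonoidAlgebra.of (ZMod p) G (g j) • x₀ - x₀)
  refine ⟨T₁ ∪ T₂, ?_, ?_⟩
  · have h1 : T₁.card ≤ S.card - 1 := le_trans (Finset.card_image_le) (le_of_eq (Finset.card_erase_of_mem hx₀S))
    have h2 : T₂.card ≤ m := le_trans (Finset.card_image_le) (by simp)
    have h3 : 1 ≤ S.card := Finset.card_pos.mpr ⟨x₀, hx₀S⟩
    have h4 := Finset.card_union_le T₁ T₂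
    omega
  · set W : Submodule R M := Submodule.span R ((T₁ ∪ T₂ : Finset M) : Set M) with hW
    have hWker : W ≤ kerSub φ hinv := by
      rw [hW, Submodule.span_le]
      intro y hy
      rw [Finset.mem_coe] at hy
      rcases Finset.mem_union.mp hy with h | h
      on_goal 1 => obtain ⟨x, hx, rfl⟩ := Finset.mem_image.mp h
      on_goal 2 => obtain ⟨j, _, rfl⟩ := Finset.mem_image.mp h
      · show φ _ = 0
        rw [map_sub, phi_smul φ hinv]
        have : augZ p G (algebraMap (ZMod p) R (c x)) = c x := augZ p G |>.commutes _
        rw [this]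
        simp only [c]
        rw [div_mul_cancel₀ _ hx₀]
        exact sub_self _
      · show φ _ = 0
        rw [map_sub, hinv, sub_self]
    refine le_antisymm hWker ?_
    -- reverse inclusion
    have hT₂mem : ∀ j : Fin m, MonoidAlgebra.of (ZMod p) G (g j) • x₀ - x₀ ∈ W := by
      intro j
      apply Submodule.subset_span
      apply Finset.mem_coe.mpr
      apply Finset.mem_union_right
      exact Finset.mem_image.mpr ⟨j, Finset.mem_univ j, rfl⟩
    have hsup : (⊤ : Submodule R M) ≤ W ⊔ Submodule.span R {x₀} := by
      rw [← hSgen, Submodule.span_le]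
      intro x hx
      by_cases hxx : x = x₀
      · rw [hxx]
        exact Submodule.mem_sup_right (Submodule.mem_span_singleton_self x₀)
      · have hmem : x - algebraMap (ZMod p) R (c x) • x₀ ∈ W := by
          apply Submodule.subset_span
          apply Finset.mem_coe.mpr
          apply Finset.mem_union_left
          exact Finset.mem_image.mpr ⟨x, Finset.mem_erase.mpr ⟨hxx, hx⟩, rfl⟩
        have : x = (x - algebraMap (ZMod p) R (c x) • x₀) + algebraMap (ZMod p) R (c x) • x₀ := by
          abel
        rw [this]
        exact Submodule.add_mem_sup hmem
          (Submodule.smul_mem _ _ (Submodule.mem_span_singleton_self x₀))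
    intro y hy
    have : y ∈ W ⊔ Submodule.span R {x₀} := hsup trivial
    rw [Submodule.mem_sup] at this
    obtain ⟨w, hw, z, hz, rfl⟩ := this
    rw [Submodule.mem_span_singleton] at hz
    obtain ⟨r, rfl⟩ := hz
    have hφw : φ w = 0 := hWker hw
    have hφy : φ (w + r • x₀) = 0 := hy
    have hφr : augZ p G r * φ x₀ = 0 := by
      rw [← phi_smul φ hinv]
      rw [map_add, hφw, zero_add] at hφy
      exact hφy
    have haug : augZ p G r = 0 := by
      rcases mul_eq_zero.mp hφr with h | h
      · exact h
      · exact absurd h hx₀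
    have hrmem := augZ_ker_mem p G (Set.range g) hgen r haug
    have hmap : r • x₀ ∈ Submodule.map (LinearMap.toSpanSingleton R M x₀)
        (Submodule.span R ((fun γ => MonoidAlgebra.of (ZMod p) G γ - 1) '' Set.range g)) :=
      ⟨r, hrmem, rfl⟩
    rw [Submodule.map_span] at hmap
    have hle : Submodule.span R ((LinearMap.toSpanSingleton R M x₀) ''
        ((fun γ => MonoidAlgebra.of (ZMod p) G γ - 1) '' Set.range g)) ≤ W := by
      rw [Submodule.span_le]
      rintro _ ⟨_, ⟨_, ⟨j, rfl⟩, rfl⟩, rfl⟩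
      have : (LinearMap.toSpanSingleton R M x₀) (MonoidAlgebra.of (ZMod p) G (g j) - 1) =
          MonoidAlgebra.of (ZMod p) G (g j) • x₀ - x₀ := by
        rw [LinearMap.toSpanSingleton_apply, sub_smul, one_smul]
      rw [this]
      exact hT₂mem j
    exact W.add_mem hw (hle hmap)

end Step

section Functional
variable {p : ℕ} [Fact p.Prime] {G : Type*} [Group G]

lemma exists_invariant_functional (hpg : IsPGroup p G)
    (Q : Type*) [AddCommGroup Q] [Module (MonoidAlgebra (ZMod p) G) Q]
    [Finite Q] [Nontrivial Q] :
    ∃ φ : Q →+ ZMod p, φ ≠ 0 ∧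
      ∀ (γ : G) (x : Q), φ (MonoidAlgebra.of (ZMod p) G γ • x) = φ x := by
  classical
  set R := MonoidAlgebra (ZMod p) G with hR
  have hpR : (p : R) = 0 := by
    rw [← map_natCast (algebraMap (ZMod p) R), ZMod.natCast_self, map_zero]
  have hQp : ∀ x : Q, p • x = 0 := by
    intro x
    rw [← Nat.cast_smul_eq_nsmul R, hpR, zero_smul]
  haveI : Module (ZMod p) Q := AddCommGroup.zmodModule hQp
  obtain ⟨q, hq⟩ := exists_ne (0 : Q)
  have hdual : ¬(∀ f : Module.Dual (ZMod p) Q, f q = 0) := by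
    rw [Module.forall_dual_apply_eq_zero_iff (ZMod p) q]
    exact hq
  push_neg at hdual
  obtain ⟨f₀, hf₀⟩ := hdual
  letI act : MulAction G (Q →+ ZMod p) :=
    { smul := fun γ f => f.comp (DistribMulAction.toAddMonoidHom Q
        (MonoidAlgebra.of (ZMod p) G γ⁻¹))
      one_smul := by
        intro f; ext x
        show f (MonoidAlgebra.of (ZMod p) G 1⁻¹ • x) = f x
        rw [inv_one, map_one, one_smul]
      mul_smul := by
        intro γ δ f; ext x
        show f (MonoidAlgebra.of (ZMod p) G (γ * δ)⁻¹ • x)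
          = f (MonoidAlgebra.of (ZMod p) G δ⁻¹ • (MonoidAlgebra.of (ZMod p) G γ⁻¹ • x))
        rw [mul_inv_rev, map_mul, mul_smul] }
  haveI : Finite (Q →+ ZMod p) := Finite.of_injective _ (DFunLike.coe_injective (F := Q →+ ZMod p))
  have hv : f₀.toAddMonoidHom ≠ 0 := by
    intro h
    apply hf₀
    have := DFunLike.congr_fun h q
    simpa using this
  have hpsmul : p • f₀.toAddMonoidHom = 0 := by
    ext x
    simp only [AddMonoidHom.nsmul_apply, AddMonoidHom.zero_apply, nsmul_eq_mul,
      ZMod.natCast_self, zero_mul]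
  have hord : addOrderOf f₀.toAddMonoidHom = p := by
    have h1 : addOrderOf f₀.toAddMonoidHom ∣ p := addOrderOf_dvd_of_nsmul_eq_zero hpsmul
    rcases (Fact.out : p.Prime).eq_one_or_self_of_dvd _ h1 with h | h
    · exact absurd (AddMonoid.addOrderOf_eq_one_iff.mp h) hv
    · exact h
  have hdvd : p ∣ Nat.card (Q →+ ZMod p) := by
    have hd := addOrderOf_dvd_natCard (LinearMap.toAddMonoidHom f₀)
    rwa [hord] at hd
  have h0fix : (0 : Q →+ ZMod p) ∈ MulAction.fixedPoints G (Q →+ ZMod p) := by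
    intro γ
    ext x
    rfl
  obtain ⟨f, hffix, hfne⟩ :=
    hpg.exists_fixed_point_of_prime_dvd_card_of_fixed_point (α := Q →+ ZMod p) hdvd h0fix
  refine ⟨f, fun h => hfne h.symm, ?_⟩
  intro γ x
  have h2 := DFunLike.congr_fun (hffix γ⁻¹) x
  have h3 : (γ⁻¹ • f) x = f (MonoidAlgebra.of (ZMod p) G γ⁻¹⁻¹ • x) := rfl
  rw [h3, inv_inv] at h2
  exact h2

end Functional

section Main
universe u
variable {p : ℕ} [Fact p.Prime] {G : Type*} [Group G]

lemma main_aux (hpg : IsPGroup p G) {m : ℕ} (hm : 1 ≤ m) (g : Fin m → G)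
    (hgen : Subgroup.closure (Set.range g) = ⊤) :
    ∀ ℓ : ℕ, ∀ (M : Type u) (_ : AddCommGroup M)
      (_ : Module (MonoidAlgebra (ZMod p) G) M)
      (S : Finset M), Submodule.span (MonoidAlgebra (ZMod p) G) (S : Set M) = ⊤ →
      ∀ N : Submodule (MonoidAlgebra (ZMod p) G) M, Nat.card (M ⧸ N) = p ^ ℓ →
      ∃ T : Finset M, T.card ≤ S.card + ℓ * (m - 1) ∧
        Submodule.span (MonoidAlgebra (ZMod p) G) (T : Set M) = N := by
  intro ℓ
  induction ℓ with
  | zero =>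
    intro M _ _ S hS N hN
    refine ⟨S, by simp, ?_⟩
    haveI : Subsingleton (M ⧸ N) := (Nat.card_eq_one_iff_unique.mp (by simpa using hN)).1
    rw [hS, eq_comm, ← Submodule.Quotient.subsingleton_iff]
    infer_instance
  | succ ℓ ih =>
    intro M _ _ S hS N hN
    classical
    set R := MonoidAlgebra (ZMod p) G with hR
    have hp' : 1 < p := (Fact.out : p.Prime).one_lt
    haveI : Finite (M ⧸ N) := Nat.finite_of_card_ne_zero (by rw [hN]; positivity)
    haveI : Nontrivial (M ⧸ N) := by
      rw [← Finite.one_lt_card_iff_nontrivial, hN]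
      exact Nat.one_lt_pow (by omega) hp'
    obtain ⟨φ₀, hφ₀ne, hφ₀inv⟩ := exists_invariant_functional hpg (M ⧸ N)
    set φ : M →+ ZMod p := φ₀.comp N.mkQ.toAddMonoidHom with hφ
    have hinv : ∀ (γ : G) (x : M), φ (MonoidAlgebra.of (ZMod p) G γ • x) = φ x := by
      intro γ x
      show φ₀ (N.mkQ (MonoidAlgebra.of (ZMod p) G γ • x)) = φ₀ (N.mkQ x)
      rw [map_smul]
      exact hφ₀inv γ _
    have hne : ∃ x₀ ∈ S, φ x₀ ≠ 0 := by
      by_contra h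
      push_neg at h
      apply hφ₀ne
      ext q
      obtain ⟨x, rfl⟩ := N.mkQ_surjective q
      have hle : (⊤ : Submodule R M) ≤ kerSub φ hinv := by
        rw [← hS]
        exact Submodule.span_le.mpr (fun x hx => h x hx)
      exact hle trivial
    obtain ⟨x₀, hx₀S, hx₀⟩ := hne
    obtain ⟨T', hT'card, hT'span⟩ := step_lemma g hgen φ hinv S hS x₀ hx₀S hx₀
    set N' : Submodule R M := kerSub φ hinv with hN'
    have hNN' : N ≤ N' := by
      intro x hx
      show φ x = 0
      show φ₀ (N.mkQ x) = 0
      rw [Submodule.mkQ_apply, (Submodule.Quotient.mk_eq_zero N).mpr hx, map_zero]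
    have hφsurj : Function.Surjective φ := by
      intro z
      obtain ⟨n, hn⟩ := ZMod.natCast_zmod_surjective (z * (φ x₀)⁻¹)
      refine ⟨n • x₀, ?_⟩
      rw [map_nsmul, nsmul_eq_mul, hn, mul_assoc, inv_mul_cancel₀ hx₀, mul_one]
    have hkerN' : N'.toAddSubgroup = φ.ker := by
      ext x
      exact Iff.rfl
    have hidxN' : Nat.card (M ⧸ N') = p := by
      show N'.toAddSubgroup.index = p
      rw [hkerN', AddSubgroup.index_ker, AddMonoidHom.range_eq_top_of_surjective φ hφsurj]
      rw [Nat.card_congr AddSubgroup.topEquiv.toEquiv, Nat.card_zmod]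
    have hrel : Nat.card (↥N' ⧸ N.comap N'.subtype) = p ^ ℓ := by
      have h := AddSubgroup.relIndex_mul_index
        (H := N.toAddSubgroup) (K := N'.toAddSubgroup) hNN'
      have h1 : N.toAddSubgroup.relIndex N'.toAddSubgroup
          = Nat.card (↥N' ⧸ N.comap N'.subtype) := rfl
      have h2 : N'.toAddSubgroup.index = Nat.card (M ⧸ N') := rfl
      have h3 : N.toAddSubgroup.index = Nat.card (M ⧸ N) := rfl
      rw [h1, h2, h3, hidxN', hN] at h
      have hppos : 0 < p := by omega
      apply Nat.eq_of_mul_eq_mul_right hppos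
      rw [h, pow_succ]
    have hT'sub : ∀ x ∈ T', x ∈ N' := fun x hx => hT'span ▸ Submodule.subset_span hx
    set S' : Finset ↥N' := T'.attach.image (fun t => (⟨t.1, hT'sub t.1 t.2⟩ : ↥N')) with hS'
    have hS'card : S'.card ≤ T'.card := le_trans Finset.card_image_le (by rw [Finset.card_attach])
    have himg : N'.subtype '' (S' : Set ↥N') = (T' : Set M) := by
      ext y
      simp only [Set.mem_image, Finset.mem_coe, hS', Finset.mem_image, Finset.mem_attach]
      constructor
      · rintro ⟨⟨y', hy'⟩, ⟨⟨t, ht⟩, -, heq⟩, rfl⟩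
        cases heq
        exact ht
      · intro hy
        exact ⟨⟨y, hT'sub y hy⟩, ⟨⟨y, hy⟩, trivial, rfl⟩, rfl⟩
    have hS'gen : Submodule.span R (S' : Set ↥N') = ⊤ := by
      apply Submodule.map_injective_of_injective N'.injective_subtype
      rw [Submodule.map_span, himg, hT'span, Submodule.map_subtype_top]
    obtain ⟨T'', hT''card, hT''span⟩ := ih ↥N' _ _ S' hS'gen (N.comap N'.subtype) hrel
    refine ⟨T''.image N'.subtype, ?_, ?_⟩
    · have hc1 : (T''.image N'.subtype).card ≤ T''.card := Finset.card_image_le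
      have hmul : (ℓ + 1) * (m - 1) = ℓ * (m - 1) + (m - 1) := by ring
      have hm1 : m - 1 + 1 = m := by omega
      set a := ℓ * (m - 1)
      set b := m - 1
      omega
    · rw [Finset.coe_image, ← Submodule.map_span, hT''span, Submodule.map_comap_subtype,
        inf_eq_right.mpr hNN']

end Main

theorem submodule_of_finite_index_generators
    (p : ℕ) (hp : p.Prime) (G : Type*) [Group G] (hpg : IsPGroup p G)
    (m : ℕ) (hm : 1 ≤ m) (g : Fin m → G)
    (hgen : Subgroup.closure (Set.range g) = ⊤)
    (M : Type*) [AddCommGroup M] [Module (MonoidAlgebra (ZMod p) G) M]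
    (d : ℕ) (S : Finset M) (hScard : S.card = d)
    (hSgen : Submodule.span (MonoidAlgebra (ZMod p) G) (S : Set M) = ⊤)
    (N : Submodule (MonoidAlgebra (ZMod p) G) M) (ℓ : ℕ)
    (hN : Nat.card (M ⧸ N) = p ^ ℓ) :
    ∃ T : Finset M, T.card ≤ d + ℓ * (m - 1) ∧
      Submodule.span (MonoidAlgebra (ZMod p) G) (T : Set M) = N := by
  haveI : Fact p.Prime := ⟨hp⟩
  obtain ⟨T, h1, h2⟩ :=
    main_aux (p := p) (G := G) hpg hm g hgen ℓ M inferInstance inferInstance S hSgen N hN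
  exact ⟨T, hScard ▸ h1, h2⟩
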